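/- Let V_F(ω) = (1/2) Σ_{j∈G} M_j (ω_j - ω*_j)² with M_j > 0, where M_j ω̇_j = -p^L_j + p^M_j - Λ_j ω_j - Σ_{k:j→k} p_{jk} + Σ_{i:i→j} p_{ij} for j ∈ G, the load buses satisfy 0 = -p^L_j - Λ_j ω_j - Σ_{k:j→k} p_{jk} + Σ_{i:i→j} p_{ij} for j ∈ L, and the equilibrium equations (the same relations with starred quantities and right-hand sides equal to zero) hold with ω*_i = ω*_j for all (i,j) ∈ E. Then V̇_F = Σ_{j∈G} (ω_j - ω*_j)(p^M_j - p^{M,*}_j) - Σ_{j∈N} Λ_j (ω_j - ω*_j)² + Σ_{(i,j)∈E} (p_{ij} - p*_{ij})(ω_j - ω_i). -/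

import Mathlib

open Finset

lemma alg_aux {Gt Lt : Type*} [Fintype Gt] [Fintype Lt] [DecidableEq Gt] [DecidableEq Lt]
    (E : Finset ((Gt ⊕ Lt) × (Gt ⊕ Lt)))
    (w : Gt ⊕ Lt → ℝ) (q : (Gt ⊕ Lt) → (Gt ⊕ Lt) → ℝ) (a : Gt → ℝ) (Λ : Gt ⊕ Lt → ℝ)
    (hL : ∀ l : Lt, 0 = -(Λ (Sum.inr l) * w (Sum.inr l))
        - (∑ k : Gt ⊕ Lt, if (Sum.inr l, k) ∈ E then q (Sum.inr l) k else 0)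
        + (∑ i : Gt ⊕ Lt, if (i, Sum.inr l) ∈ E then q i (Sum.inr l) else 0)) :
    ∑ j : Gt, w (Sum.inl j) * (a j - Λ (Sum.inl j) * w (Sum.inl j)
        - (∑ k : Gt ⊕ Lt, if (Sum.inl j, k) ∈ E then q (Sum.inl j) k else 0)
        + (∑ i : Gt ⊕ Lt, if (i, Sum.inl j) ∈ E then q i (Sum.inl j) else 0))
    = (∑ j : Gt, w (Sum.inl j) * a j) - (∑ b : Gt ⊕ Lt, Λ b * (w b)^2)
      + ∑ e ∈ E, q e.1 e.2 * (w e.2 - w e.1) := by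
  classical
  have hin : (∑ b : Gt ⊕ Lt, w b * (∑ i : Gt ⊕ Lt, if (i, b) ∈ E then q i b else 0))
      = ∑ i : Gt ⊕ Lt, ∑ b : Gt ⊕ Lt, (if (i, b) ∈ E then q i b * w b else 0) := by
    rw [Finset.sum_comm]
    refine Finset.sum_congr rfl fun b _ => ?_
    rw [Finset.mul_sum]
    exact Finset.sum_congr rfl fun i _ => by split_ifs <;> ring
  have hout : (∑ b : Gt ⊕ Lt, w b * (∑ k : Gt ⊕ Lt, if (b, k) ∈ E then q b k else 0))
      = ∑ i : Gt ⊕ Lt, ∑ b : Gt ⊕ Lt, (if (i, b) ∈ E then q i b * w i else 0) := by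
    refine Finset.sum_congr rfl fun i _ => ?_
    rw [Finset.mul_sum]
    exact Finset.sum_congr rfl fun b _ => by split_ifs <;> ring
  have hKey : (∑ b : Gt ⊕ Lt, w b *
        ((∑ i : Gt ⊕ Lt, if (i, b) ∈ E then q i b else 0)
          - (∑ k : Gt ⊕ Lt, if (b, k) ∈ E then q b k else 0)))
      = ∑ e ∈ E, q e.1 e.2 * (w e.2 - w e.1) := by
    calc (∑ b : Gt ⊕ Lt, w b *
          ((∑ i : Gt ⊕ Lt, if (i, b) ∈ E then q i b else 0)
            - (∑ k : Gt ⊕ Lt, if (b, k) ∈ E then q b k else 0)))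
        = (∑ b : Gt ⊕ Lt, w b * (∑ i : Gt ⊕ Lt, if (i, b) ∈ E then q i b else 0))
          - (∑ b : Gt ⊕ Lt, w b * (∑ k : Gt ⊕ Lt, if (b, k) ∈ E then q b k else 0)) := by
          rw [← Finset.sum_sub_distrib]; exact Finset.sum_congr rfl fun b _ => by ring
      _ = ∑ i : Gt ⊕ Lt, ∑ b : Gt ⊕ Lt, (if (i, b) ∈ E then q i b * (w b - w i) else 0) := by
          rw [hin, hout, ← Finset.sum_sub_distrib]
          refine Finset.sum_congr rfl fun i _ => ?_
          rw [← Finset.sum_sub_distrib]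
          exact Finset.sum_congr rfl fun b _ => by split_ifs <;> ring
      _ = ∑ e : ((Gt ⊕ Lt) × (Gt ⊕ Lt)), (if e ∈ E then q e.1 e.2 * (w e.2 - w e.1) else 0) := by
          rw [Fintype.sum_prod_type]
      _ = ∑ e ∈ E, q e.1 e.2 * (w e.2 - w e.1) := by
          rw [Finset.sum_ite_mem, Finset.univ_inter]
  rw [← hKey]
  rw [Fintype.sum_sum_type (f := fun b => Λ b * (w b)^2),
      Fintype.sum_sum_type (f := fun b => w b *
        ((∑ i : Gt ⊕ Lt, if (i, b) ∈ E then q i b else 0)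
          - (∑ k : Gt ⊕ Lt, if (b, k) ∈ E then q b k else 0)))]
  have hLoad : ∀ l : Lt, w (Sum.inr l) *
      ((∑ i : Gt ⊕ Lt, if (i, Sum.inr l) ∈ E then q i (Sum.inr l) else 0)
        - (∑ k : Gt ⊕ Lt, if (Sum.inr l, k) ∈ E then q (Sum.inr l) k else 0))
      = Λ (Sum.inr l) * w (Sum.inr l)^2 := by
    intro l
    have h := hL l
    have h2 : (∑ i : Gt ⊕ Lt, if (i, Sum.inr l) ∈ E then q i (Sum.inr l) else 0)
        - (∑ k : Gt ⊕ Lt, if (Sum.inr l, k) ∈ E then q (Sum.inr l) k else 0)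
        = Λ (Sum.inr l) * w (Sum.inr l) := by linarith
    rw [h2]; ring
  rw [Finset.sum_congr rfl (fun l _ => hLoad l)]
  have hG : ∑ j : Gt, w (Sum.inl j) * (a j - Λ (Sum.inl j) * w (Sum.inl j)
        - (∑ k : Gt ⊕ Lt, if (Sum.inl j, k) ∈ E then q (Sum.inl j) k else 0)
        + (∑ i : Gt ⊕ Lt, if (i, Sum.inl j) ∈ E then q i (Sum.inl j) else 0))
      = (∑ j : Gt, w (Sum.inl j) * a j) - (∑ j : Gt, Λ (Sum.inl j) * (w (Sum.inl j))^2)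
        + ∑ j : Gt, w (Sum.inl j) *
          ((∑ i : Gt ⊕ Lt, if (i, Sum.inl j) ∈ E then q i (Sum.inl j) else 0)
            - (∑ k : Gt ⊕ Lt, if (Sum.inl j, k) ∈ E then q (Sum.inl j) k else 0)) := by
    rw [← Finset.sum_sub_distrib, ← Finset.sum_add_distrib]
    exact Finset.sum_congr rfl fun j _ => by ring
  rw [hG]; ring

/-- Time derivative of the kinetic-energy Lyapunov component `V_F`. -/
theorem stmt_7 {Gt Lt : Type*} [Fintype Gt] [Fintype Lt] [DecidableEq Gt] [DecidableEq Lt]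
    (E : Finset ((Gt ⊕ Lt) × (Gt ⊕ Lt)))
    (M : Gt → ℝ) (hM : ∀ j, 0 < M j)
    (Λ : Gt ⊕ Lt → ℝ) (hΛ : ∀ b, 0 ≤ Λ b)
    (pL ωstar : Gt ⊕ Lt → ℝ) (pMstar : Gt → ℝ) (pstar : (Gt ⊕ Lt) → (Gt ⊕ Lt) → ℝ)
    (ω : Gt ⊕ Lt → ℝ → ℝ) (pM : Gt → ℝ → ℝ) (p : (Gt ⊕ Lt) → (Gt ⊕ Lt) → ℝ → ℝ)
    (t : ℝ)
    -- generator swing dynamics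
    (hgen : ∀ j : Gt, HasDerivAt (ω (Sum.inl j))
      ((1 / M j) * (-pL (Sum.inl j) + pM j t - Λ (Sum.inl j) * ω (Sum.inl j) t
        - (∑ k : Gt ⊕ Lt, if (Sum.inl j, k) ∈ E then p (Sum.inl j) k t else 0)
        + (∑ i : Gt ⊕ Lt, if (i, Sum.inl j) ∈ E then p i (Sum.inl j) t else 0))) t)
    -- load bus power balance
    (hload : ∀ l : Lt, 0 = -pL (Sum.inr l) - Λ (Sum.inr l) * ω (Sum.inr l) t
        - (∑ k : Gt ⊕ Lt, if (Sum.inr l, k) ∈ E then p (Sum.inr l) k t else 0)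
        + (∑ i : Gt ⊕ Lt, if (i, Sum.inr l) ∈ E then p i (Sum.inr l) t else 0))
    -- equilibrium equations
    (heqG : ∀ j : Gt, 0 = -pL (Sum.inl j) + pMstar j - Λ (Sum.inl j) * ωstar (Sum.inl j)
        - (∑ k : Gt ⊕ Lt, if (Sum.inl j, k) ∈ E then pstar (Sum.inl j) k else 0)
        + (∑ i : Gt ⊕ Lt, if (i, Sum.inl j) ∈ E then pstar i (Sum.inl j) else 0))
    (heqL : ∀ l : Lt, 0 = -pL (Sum.inr l) - Λ (Sum.inr l) * ωstar (Sum.inr l)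
        - (∑ k : Gt ⊕ Lt, if (Sum.inr l, k) ∈ E then pstar (Sum.inr l) k else 0)
        + (∑ i : Gt ⊕ Lt, if (i, Sum.inr l) ∈ E then pstar i (Sum.inr l) else 0))
    (hωstar : ∀ e ∈ E, ωstar e.1 = ωstar e.2) :
    HasDerivAt
      (fun s => (1/2) * ∑ j : Gt, M j * (ω (Sum.inl j) s - ωstar (Sum.inl j))^2)
      ((∑ j : Gt, (ω (Sum.inl j) t - ωstar (Sum.inl j)) * (pM j t - pMstar j))
        - (∑ b : Gt ⊕ Lt, Λ b * (ω b t - ωstar b)^2)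
        + (∑ e ∈ E, (p e.1 e.2 t - pstar e.1 e.2) * (ω e.2 t - ω e.1 t))) t := by
  classical
  -- abbreviations (as plain functions)
  let w : Gt ⊕ Lt → ℝ := fun b => ω b t - ωstar b
  let q : (Gt ⊕ Lt) → (Gt ⊕ Lt) → ℝ := fun a b => p a b t - pstar a b
  -- splitting indicator sums of q
  have hqout : ∀ b : Gt ⊕ Lt,
      (∑ k : Gt ⊕ Lt, if (b, k) ∈ E then q b k else 0)
      = (∑ k : Gt ⊕ Lt, if (b, k) ∈ E then p b k t else 0)
        - (∑ k : Gt ⊕ Lt, if (b, k) ∈ E then pstar b k else 0) := by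
    intro b
    rw [← Finset.sum_sub_distrib]
    exact Finset.sum_congr rfl fun k _ => by split_ifs <;> simp [q]
  have hqin : ∀ b : Gt ⊕ Lt,
      (∑ i : Gt ⊕ Lt, if (i, b) ∈ E then q i b else 0)
      = (∑ i : Gt ⊕ Lt, if (i, b) ∈ E then p i b t else 0)
        - (∑ i : Gt ⊕ Lt, if (i, b) ∈ E then pstar i b else 0) := by
    intro b
    rw [← Finset.sum_sub_distrib]
    exact Finset.sum_congr rfl fun i _ => by split_ifs <;> simp [q]
  -- the derivative with relative (starred-subtracted) value
  have hder : HasDerivAt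
      (fun s => (1/2) * ∑ j : Gt, M j * (ω (Sum.inl j) s - ωstar (Sum.inl j))^2)
      (∑ j : Gt, w (Sum.inl j) * ((pM j t - pMstar j) - Λ (Sum.inl j) * w (Sum.inl j)
        - (∑ k : Gt ⊕ Lt, if (Sum.inl j, k) ∈ E then q (Sum.inl j) k else 0)
        + (∑ i : Gt ⊕ Lt, if (i, Sum.inl j) ∈ E then q i (Sum.inl j) else 0))) t := by
    have h1 : ∀ j : Gt, HasDerivAt
        (fun s => M j * (ω (Sum.inl j) s - ωstar (Sum.inl j))^2)
        (M j * ((2 : ℕ) * (ω (Sum.inl j) t - ωstar (Sum.inl j)) ^ 1 *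
          ((1 / M j) * (-pL (Sum.inl j) + pM j t - Λ (Sum.inl j) * ω (Sum.inl j) t
            - (∑ k : Gt ⊕ Lt, if (Sum.inl j, k) ∈ E then p (Sum.inl j) k t else 0)
            + (∑ i : Gt ⊕ Lt, if (i, Sum.inl j) ∈ E then p i (Sum.inl j) t else 0))))) t := by
      intro j
      exact (((hgen j).sub_const _).pow 2).const_mul (M j)
    have h2 := (HasDerivAt.fun_sum (fun j (_ : j ∈ Finset.univ) => h1 j)).const_mul (1/2 : ℝ)
    refine h2.congr_deriv ?_
    symm
    rw [Finset.mul_sum]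
    refine Finset.sum_congr rfl fun j _ => ?_
    have hMj := (hM j).ne'
    have hq := heqG j
    have hR : (1/2 : ℝ) * (M j * ((2 : ℕ) * (ω (Sum.inl j) t - ωstar (Sum.inl j)) ^ 1 *
          ((1 / M j) * (-pL (Sum.inl j) + pM j t - Λ (Sum.inl j) * ω (Sum.inl j) t
            - (∑ k : Gt ⊕ Lt, if (Sum.inl j, k) ∈ E then p (Sum.inl j) k t else 0)
            + (∑ i : Gt ⊕ Lt, if (i, Sum.inl j) ∈ E then p i (Sum.inl j) t else 0)))))
        = (ω (Sum.inl j) t - ωstar (Sum.inl j)) *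
          (-pL (Sum.inl j) + pM j t - Λ (Sum.inl j) * ω (Sum.inl j) t
            - (∑ k : Gt ⊕ Lt, if (Sum.inl j, k) ∈ E then p (Sum.inl j) k t else 0)
            + (∑ i : Gt ⊕ Lt, if (i, Sum.inl j) ∈ E then p i (Sum.inl j) t else 0)) := by
      field_simp
      ring
    rw [hR]
    have hS : ((pM j t - pMstar j) - Λ (Sum.inl j) * w (Sum.inl j)
        - (∑ k : Gt ⊕ Lt, if (Sum.inl j, k) ∈ E then q (Sum.inl j) k else 0)
        + (∑ i : Gt ⊕ Lt, if (i, Sum.inl j) ∈ E then q i (Sum.inl j) else 0))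
        = (-pL (Sum.inl j) + pM j t - Λ (Sum.inl j) * ω (Sum.inl j) t
            - (∑ k : Gt ⊕ Lt, if (Sum.inl j, k) ∈ E then p (Sum.inl j) k t else 0)
            + (∑ i : Gt ⊕ Lt, if (i, Sum.inl j) ∈ E then p i (Sum.inl j) t else 0)) := by
      rw [hqout, hqin]
      show (pM j t - pMstar j) - Λ (Sum.inl j) * (ω (Sum.inl j) t - ωstar (Sum.inl j)) - _ + _ = _
      nlinarith [hq, mul_self_nonneg (0:ℝ)]
    rw [hS]
  convert hder using 1
  have hEdge : (∑ e ∈ E, (p e.1 e.2 t - pstar e.1 e.2) * (ω e.2 t - ω e.1 t))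
      = ∑ e ∈ E, q e.1 e.2 * (w e.2 - w e.1) := by
    refine Finset.sum_congr rfl fun e he => ?_
    have := hωstar e he
    show _ = (p e.1 e.2 t - pstar e.1 e.2) * ((ω e.2 t - ωstar e.2) - (ω e.1 t - ωstar e.1))
    rw [this]; ring
  rw [hEdge]
  refine (alg_aux E w q (fun j => pM j t - pMstar j) Λ ?_).symm
  intro l
  have h1 := hload l
  have h2 := heqL l
  rw [hqout, hqin]
  show (0:ℝ) = -(Λ (Sum.inr l) * (ω (Sum.inr l) t - ωstar (Sum.inr l))) - _ + _
  linarith
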